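/- Let M = (E, 𝓘) be a matroid, let m ≥ 1, Δ ≥ 1, μ ≥ 0 be integers, let W : E → ℤ^m satisfy ‖W(e)‖_∞ ≤ Δ for all e ∈ E, let A, B ∈ 𝓘 be disjoint independent sets with |A| = |B| = k and ‖W(A) − W(B)‖₁ ≤ μ, and let d ∈ ℤ^m. Then there exist unicolor subsets A' ⊆ A and B' ⊆ B of equal cardinality such that: (i) (A \ A') ∪ B' ∈ 𝓘; (ii) |A'| = |B'| ≥ (k − ‖d‖₁·μ) / ((2‖d‖₁Δ + 1)² · (2Δ+1)^{2m}); and (iii) dᵀW(a) ≥ dᵀW(b) for every a ∈ A' and b ∈ B'. -/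

import Mathlib

/-- A matroid on a finite ground set `E`, given by its family of independent sets. -/
structure FinMatroid (E : Type*) [DecidableEq E] where
  Indep : Finset E → Prop
  empty_indep : Indep ∅
  subset_indep : ∀ ⦃X Y : Finset E⦄, X ⊆ Y → Indep Y → Indep X
  exchange : ∀ ⦃X Y : Finset E⦄, Indep X → Indep Y → X.card < Y.card →
    ∃ e ∈ Y \ X, Indep (insert e X)

/-- A set is unicolor (w.r.t. a multidimensional weight `W`) if all its elements
have the same weight vector. -/
def Unicolor {E : Type*} {m : ℕ} (W : E → Fin m → ℤ) (S : Finset E) : Prop :=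
  ∀ x ∈ S, ∀ y ∈ S, W x = W y

lemma FinMatroid.aug' {E : Type*} [DecidableEq E] (M : FinMatroid E) (Y : Finset E)
    (hY : M.Indep Y) : ∀ n (X : Finset E), M.Indep X → X.card + n = Y.card →
    ∃ Z, M.Indep Z ∧ X ⊆ Z ∧ Z ⊆ X ∪ Y ∧ Z.card = Y.card := by
  intro n
  induction n with
  | zero =>
    intro X hX h
    exact ⟨X, hX, subset_rfl, Finset.subset_union_left, by omega⟩
  | succ n ih =>
    intro X hX h
    obtain ⟨e, he, hei⟩ := M.exchange hX hY (by omega)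
    have heX : e ∉ X := (Finset.mem_sdiff.mp he).2
    have heY : e ∈ Y := (Finset.mem_sdiff.mp he).1
    obtain ⟨Z, hZ, hXZ, hZXY, hZc⟩ := ih (insert e X) hei
      (by rw [Finset.card_insert_of_notMem heX]; omega)
    refine ⟨Z, hZ, (Finset.subset_insert e X).trans hXZ, ?_, hZc⟩
    intro x hx
    rcases Finset.mem_union.mp (hZXY hx) with h1 | h2
    · rcases Finset.mem_insert.mp h1 with rfl | h
      · exact Finset.mem_union_right _ heY
      · exact Finset.mem_union_left _ h
    · exact Finset.mem_union_right _ h2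

lemma FinMatroid.aug {E : Type*} [DecidableEq E] (M : FinMatroid E) {X Y : Finset E}
    (hX : M.Indep X) (hY : M.Indep Y) (h : X.card ≤ Y.card) :
    ∃ Z, M.Indep Z ∧ X ⊆ Z ∧ Z ⊆ X ∪ Y ∧ Z.card = Y.card :=
  M.aug' Y hY (Y.card - X.card) X hX (by omega)

lemma exists_unicolor_sub {E : Type*} [DecidableEq E] {m Δ : ℕ}
    (W : E → Fin m → ℤ) (hW : ∀ e i, |W e i| ≤ (Δ : ℤ)) (S : Finset E) :
    ∃ T, T ⊆ S ∧ Unicolor W T ∧ S.card ≤ (2*Δ+1)^m * T.card := by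
  classical
  rcases S.eq_empty_or_nonempty with rfl | hS
  · exact ⟨∅, subset_rfl, by intro x hx; simp at hx, by simp⟩
  · set I := S.image W with hI
    have hIne : I.Nonempty := hS.image W
    obtain ⟨c, hcI, hmax⟩ := I.exists_max_image (fun c => (S.filter (fun e => W e = c)).card) hIne
    refine ⟨S.filter (fun e => W e = c), Finset.filter_subset _ _, ?_, ?_⟩
    · intro x hx y hy
      rw [(Finset.mem_filter.mp hx).2, (Finset.mem_filter.mp hy).2]
    · have h1 : S.card = ∑ c' ∈ I, (S.filter (fun e => W e = c')).card :=
        Finset.card_eq_sum_card_fiberwise (fun e he => Finset.mem_image_of_mem W he)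
    
      have h2 : S.card ≤ I.card * (S.filter (fun e => W e = c)).card := by
        rw [h1]
        calc ∑ c' ∈ I, (S.filter (fun e => W e = c')).card
            ≤ I.card • (S.filter (fun e => W e = c)).card :=
              Finset.sum_le_card_nsmul I _ _ (fun c' hc' => hmax c' hc')
          _ = I.card * (S.filter (fun e => W e = c)).card := by rw [smul_eq_mul]
      have h3 : I.card ≤ (2*Δ+1)^m := by
        have hsub : I ⊆ Fintype.piFinset (fun _ : Fin m => Finset.Icc (-(Δ:ℤ)) (Δ:ℤ)) := by
          intro c' hc'
          obtain ⟨e, he, rfl⟩ := Finset.mem_image.mp hc'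
          rw [Fintype.mem_piFinset]
          intro i
          rw [Finset.mem_Icc]
          exact abs_le.mp (hW e i)
        calc I.card ≤ _ := Finset.card_le_card hsub
          _ = (2*Δ+1)^m := by
            rw [Fintype.card_piFinset]
            simp only [Int.card_Icc]
            rw [Finset.prod_const, Finset.card_univ, Fintype.card_fin]
            congr 1
            omega
      calc S.card ≤ I.card * (S.filter (fun e => W e = c)).card := h2
        _ ≤ (2*Δ+1)^m * (S.filter (fun e => W e = c)).card :=
            Nat.mul_le_mul_right _ h3

lemma card_filter_int {E : Type*} [DecidableEq E] (B : Finset E) (p : E → Prop) [DecidablePred p] :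
    ((B.filter p).card : ℤ) = ∑ b ∈ B, if p b then (1:ℤ) else 0 := by
  rw [Finset.card_filter]; push_cast; rfl

lemma card_filter_int' (s : Finset ℤ) (p : ℤ → Prop) [DecidablePred p] :
    ((s.filter p).card : ℤ) = ∑ b ∈ s, if p b then (1:ℤ) else 0 := by
  rw [Finset.card_filter]; push_cast; rfl

lemma exists_thresh {E : Type*} [DecidableEq E] (A B : Finset E) (v : E → ℤ) (T : ℤ) (hT : 0 ≤ T)
    (hvA : ∀ a ∈ A, |v a| ≤ T) (hvB : ∀ b ∈ B, |v b| ≤ T)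
    (hcard : A.card = B.card) (c : ℤ)
    (hc : -c ≤ (∑ a ∈ A, v a) - ∑ b ∈ B, v b) :
    ∃ t : ℤ, (A.card : ℤ) - c ≤
      (2*T+1) * (((B.filter (fun e => v e ≤ t)).card : ℤ) - ((A.filter (fun e => v e < t)).card : ℤ)) := by
  classical
  set s : Finset ℤ := Finset.Icc (-T) T with hs
  have hsne : s.Nonempty := ⟨0, by simp only [hs, Finset.mem_Icc]; omega⟩
  have hscard : (s.card : ℤ) = 2*T+1 := by
    rw [hs, Int.card_Icc]; omega
  set f : ℤ → ℤ := fun t =>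
    ((B.filter (fun e => v e ≤ t)).card : ℤ) - ((A.filter (fun e => v e < t)).card : ℤ) with hf
  have countB : ∀ x : ℤ, |x| ≤ T → ((s.filter (fun t => x ≤ t)).card : ℤ) = T - x + 1 := by
    intro x hx
    have he : s.filter (fun t => x ≤ t) = Finset.Icc x T := by
      ext t
      simp only [hs, Finset.mem_filter, Finset.mem_Icc]
      have := abs_le.mp hx
      constructor
      · rintro ⟨⟨h1, h2⟩, h3⟩; exact ⟨h3, h2⟩
      · rintro ⟨h1, h2⟩; exact ⟨⟨by omega, h2⟩, h1⟩
    rw [he, Int.card_Icc]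
    have := abs_le.mp hx
    omega
  have countA : ∀ x : ℤ, |x| ≤ T → ((s.filter (fun t => x < t)).card : ℤ) = T - x := by
    intro x hx
    have he : s.filter (fun t => x < t) = Finset.Icc (x+1) T := by
      ext t
      simp only [hs, Finset.mem_filter, Finset.mem_Icc]
      have := abs_le.mp hx
      constructor
      · rintro ⟨⟨h1, h2⟩, h3⟩; exact ⟨by omega, h2⟩
      · rintro ⟨h1, h2⟩; exact ⟨⟨by omega, h2⟩, by omega⟩
    rw [he, Int.card_Icc]
    have := abs_le.mp hx
    omega
  have sumB : ∑ t ∈ s, ((B.filter (fun e => v e ≤ t)).card : ℤ) = ∑ b ∈ B, (T - v b + 1) := by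
    calc ∑ t ∈ s, ((B.filter (fun e => v e ≤ t)).card : ℤ)
        = ∑ t ∈ s, ∑ b ∈ B, (if v b ≤ t then (1:ℤ) else 0) := by
          exact Finset.sum_congr rfl (fun t _ => card_filter_int B _)
      _ = ∑ b ∈ B, ∑ t ∈ s, (if v b ≤ t then (1:ℤ) else 0) := Finset.sum_comm
      _ = ∑ b ∈ B, ((s.filter (fun t => v b ≤ t)).card : ℤ) := by
          exact Finset.sum_congr rfl (fun b _ => (card_filter_int' s _).symm)
      _ = ∑ b ∈ B, (T - v b + 1) :=
          Finset.sum_congr rfl (fun b hb => countB (v b) (hvB b hb))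
  have sumA : ∑ t ∈ s, ((A.filter (fun e => v e < t)).card : ℤ) = ∑ a ∈ A, (T - v a) := by
    calc ∑ t ∈ s, ((A.filter (fun e => v e < t)).card : ℤ)
        = ∑ t ∈ s, ∑ a ∈ A, (if v a < t then (1:ℤ) else 0) := by
          exact Finset.sum_congr rfl (fun t _ => card_filter_int A _)
      _ = ∑ a ∈ A, ∑ t ∈ s, (if v a < t then (1:ℤ) else 0) := Finset.sum_comm
      _ = ∑ a ∈ A, ((s.filter (fun t => v a < t)).card : ℤ) := by
          exact Finset.sum_congr rfl (fun a _ => (card_filter_int' s _).symm)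
      _ = ∑ a ∈ A, (T - v a) :=
          Finset.sum_congr rfl (fun a ha => countA (v a) (hvA a ha))
  have hsumf : (A.card : ℤ) - c ≤ ∑ t ∈ s, f t := by
    have : ∑ t ∈ s, f t = (∑ b ∈ B, (T - v b + 1)) - ∑ a ∈ A, (T - v a) := by
      rw [hf, Finset.sum_sub_distrib, sumB, sumA]
    rw [this, Finset.sum_add_distrib, Finset.sum_sub_distrib, Finset.sum_sub_distrib]
    simp only [Finset.sum_const, nsmul_eq_mul, mul_one]
    have hAB : (A.card:ℤ) = B.card := by exact_mod_cast hcard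
    have hABT : (A.card:ℤ) * T = B.card * T := by rw [hAB]
    linarith
  obtain ⟨t₀, ht₀s, hmax⟩ := s.exists_max_image f hsne
  refine ⟨t₀, ?_⟩
  have : ∑ t ∈ s, f t ≤ s.card • f t₀ := Finset.sum_le_card_nsmul s f _ (fun x hx => hmax x hx)
  rw [nsmul_eq_mul, hscard] at this
  calc (A.card : ℤ) - c ≤ ∑ t ∈ s, f t := hsumf
    _ ≤ (2*T+1) * f t₀ := this

set_option maxHeartbeats 1000000 in
/-- Multidimensional monotone exchange lemma: for disjoint equicardinal independent sets
`A, B` with `‖W(A) − W(B)‖₁ ≤ μ` and any `d ∈ ℤ^m`, there are unicolor subsets `A' ⊆ A`,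
`B' ⊆ B` of equal cardinality at least `(k − ‖d‖₁μ)/((2‖d‖₁Δ+1)²(2Δ+1)^{2m})` such that
`(A \ A') ∪ B'` is independent and `dᵀW(a) ≥ dᵀW(b)` for `a ∈ A'`, `b ∈ B'`. -/
theorem monotone_exchange_multidim {E : Type*} [DecidableEq E] [Fintype E]
    (M : FinMatroid E) (m Δ μ : ℕ) (hm : 1 ≤ m) (hΔ : 1 ≤ Δ)
    (W : E → Fin m → ℤ) (hW : ∀ e i, |W e i| ≤ (Δ : ℤ))
    (A B : Finset E) (hA : M.Indep A) (hB : M.Indep B) (hAB : Disjoint A B)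
    (k : ℕ) (hAk : A.card = k) (hBk : B.card = k)
    (hμ : ∑ i, |(∑ e ∈ A, W e) i - (∑ e ∈ B, W e) i| ≤ (μ : ℤ))
    (d : Fin m → ℤ) :
    ∃ A' ⊆ A, ∃ B' ⊆ B,
      Unicolor W A' ∧ Unicolor W B' ∧
      M.Indep ((A \ A') ∪ B') ∧
      A'.card = B'.card ∧
      ((k : ℝ) - ((∑ i, |d i| : ℤ) : ℝ) * (μ : ℝ)) /
          ((2 * ((∑ i, |d i| : ℤ) : ℝ) * (Δ : ℝ) + 1) ^ 2 * (2 * (Δ : ℝ) + 1) ^ (2 * m))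
        ≤ (A'.card : ℝ) ∧
      (∀ a ∈ A', ∀ b ∈ B', ∑ i, d i * W b i ≤ ∑ i, d i * W a i) := by
  classical
  set D : ℤ := ∑ i, |d i| with hD
  have hD0 : 0 ≤ D := Finset.sum_nonneg (fun i _ => abs_nonneg _)
  set v : E → ℤ := fun e => ∑ i, d i * W e i with hv
  have hdenom : (0:ℝ) < (2 * (D : ℝ) * (Δ : ℝ) + 1) ^ 2 * (2 * (Δ : ℝ) + 1) ^ (2 * m) := by
    have h1 : (0:ℝ) ≤ (D:ℝ) := by exact_mod_cast hD0
    have h2 : (0:ℝ) ≤ (Δ:ℝ) := by positivity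
    positivity
  by_cases hk : (k : ℤ) ≤ D * μ
  · refine ⟨∅, Finset.empty_subset _, ∅, Finset.empty_subset _, ?_, ?_, ?_, rfl, ?_, ?_⟩
    · intro x hx; exact absurd hx (Finset.notMem_empty x)
    · intro x hx; exact absurd hx (Finset.notMem_empty x)
    · simpa using hA
    · rw [Finset.card_empty, Nat.cast_zero]
      apply div_nonpos_of_nonpos_of_nonneg
      · have : (k:ℝ) ≤ (D:ℝ) * (μ:ℝ) := by exact_mod_cast hk
        linarith
      · exact le_of_lt hdenom
    · intro a ha; exact absurd ha (Finset.notMem_empty a)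
  · push_neg at hk
    have hvbd : ∀ e : E, |v e| ≤ D * Δ := by
      intro e
      calc |v e| ≤ ∑ i, |d i * W e i| := Finset.abs_sum_le_sum_abs _ _
        _ = ∑ i, |d i| * |W e i| := by simp [abs_mul]
        _ ≤ ∑ i, |d i| * Δ := Finset.sum_le_sum
            (fun i _ => mul_le_mul_of_nonneg_left (hW e i) (abs_nonneg _))
        _ = D * Δ := by rw [← Finset.sum_mul]
    have hvAB : -(D * μ) ≤ (∑ a ∈ A, v a) - ∑ b ∈ B, v b := by
      have hswap : (∑ a ∈ A, v a) - ∑ b ∈ B, v b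
          = ∑ i, d i * ((∑ e ∈ A, W e) i - (∑ e ∈ B, W e) i) := by
        simp only [hv, mul_sub, Finset.sum_sub_distrib, Finset.sum_apply, Finset.mul_sum]
        rw [Finset.sum_comm (s := A), Finset.sum_comm (s := B)]
      rw [hswap]
      have h1 : |∑ i, d i * ((∑ e ∈ A, W e) i - (∑ e ∈ B, W e) i)| ≤ D * μ := by
        calc |∑ i, d i * ((∑ e ∈ A, W e) i - (∑ e ∈ B, W e) i)|
            ≤ ∑ i, |d i * ((∑ e ∈ A, W e) i - (∑ e ∈ B, W e) i)| := Finset.abs_sum_le_sum_abs _ _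
          _ = ∑ i, |d i| * |(∑ e ∈ A, W e) i - (∑ e ∈ B, W e) i| := by simp [abs_mul]
          _ ≤ ∑ i, |d i| * μ := Finset.sum_le_sum (fun i _ => by
              apply mul_le_mul_of_nonneg_left _ (abs_nonneg _)
              calc |(∑ e ∈ A, W e) i - (∑ e ∈ B, W e) i|
                  ≤ ∑ j, |(∑ e ∈ A, W e) j - (∑ e ∈ B, W e) j| :=
                    Finset.single_le_sum (f := fun j => |(∑ e ∈ A, W e) j - (∑ e ∈ B, W e) j|)
                      (fun j _ => abs_nonneg _) (Finset.mem_univ i)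
                _ ≤ μ := hμ)
          _ = D * μ := by rw [← Finset.sum_mul]
      linarith [neg_abs_le (∑ i, d i * ((∑ e ∈ A, W e) i - (∑ e ∈ B, W e) i)), h1]
    obtain ⟨t, ht⟩ := exists_thresh A B v (D * Δ) (mul_nonneg hD0 (by positivity))
      (fun a _ => hvbd a) (fun b _ => hvbd b) (by omega) (D * μ) hvAB
    rw [hAk] at ht
    set N : ℤ := 2 * (D * Δ) + 1 with hN
    have hDΔ0 : (0:ℤ) ≤ D * Δ := mul_nonneg hD0 (by positivity)
    have hN1 : 1 ≤ N := by rw [hN]; linarith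
    set P : ℕ := (2*Δ+1)^m with hP
    have hP1 : 1 ≤ P := Nat.one_le_pow _ _ (by omega)
    set Alo : Finset E := A.filter (fun e => v e < t) with hAlo
    set Bleq : Finset E := B.filter (fun e => v e ≤ t) with hBleq
    have hposdiff : (Alo.card : ℤ) < Bleq.card := by
      by_contra h
      push_neg at h
      have h0 : N * (((Bleq.card:ℤ)) - ((Alo.card:ℤ))) ≤ 0 :=
        mul_nonpos_of_nonneg_of_nonpos (by linarith) (by linarith)
      linarith [ht, hk]
    have hAloI : M.Indep Alo := M.subset_indep (Finset.filter_subset _ _) hA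
    have hBleqI : M.Indep Bleq := M.subset_indep (Finset.filter_subset _ _) hB
    obtain ⟨Z₁, hZ₁I, hAloZ₁, hZ₁sub, hZ₁c⟩ := M.aug hAloI hBleqI (by exact_mod_cast hposdiff.le)
    set B₁' : Finset E := Z₁ \ Alo with hB₁'
    have hB₁'sub : B₁' ⊆ Bleq := by
      intro x hx
      rcases Finset.mem_sdiff.mp hx with ⟨hxZ, hxA⟩
      rcases Finset.mem_union.mp (hZ₁sub hxZ) with h | h
      · exact absurd h hxA
      · exact h
    have hB₁'card : B₁'.card + Alo.card = Bleq.card := by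
      rw [hB₁', Finset.card_sdiff_add_card_eq_card hAloZ₁, hZ₁c]
    obtain ⟨B₁, hB₁sub, hB₁uni, hB₁p⟩ := exists_unicolor_sub W hW B₁'
    set j := B₁.card with hj
    have hB₁B : B₁ ⊆ B := hB₁sub.trans (hB₁'sub.trans (Finset.filter_subset _ _))
    set Z₂ : Finset E := Alo ∪ B₁ with hZ₂
    have hZ₂I : M.Indep Z₂ := by
      apply M.subset_indep _ hZ₁I
      exact Finset.union_subset hAloZ₁ (hB₁sub.trans Finset.sdiff_subset)
    have hdisj₂ : Disjoint Alo B₁ :=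
      Finset.disjoint_of_subset_left (Finset.filter_subset _ _)
        (Finset.disjoint_of_subset_right hB₁B hAB)
    have hZ₂c : Z₂.card = Alo.card + j := by
      rw [hZ₂, Finset.card_union_of_disjoint hdisj₂]
    have hBleqB : Bleq.card ≤ k := by
      rw [← hBk]
      exact Finset.card_le_card (Finset.filter_subset _ _)
    have hjB₁' : j ≤ B₁'.card := Finset.card_le_card hB₁sub
    have hZ₂k : Z₂.card ≤ A.card := by rw [hZ₂c, hAk]; omega
    obtain ⟨Z, hZI, hZ₂Z, hZsub, hZc⟩ := M.aug hZ₂I hA hZ₂k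
    rw [hAk] at hZc
    have hZAB₁ : Z ⊆ A ∪ B₁ := by
      intro x hx
      rcases Finset.mem_union.mp (hZsub hx) with h | h
      · rcases Finset.mem_union.mp h with h' | h'
        · exact Finset.mem_union_left _ (Finset.filter_subset _ _ h')
        · exact Finset.mem_union_right _ h'
      · exact Finset.mem_union_left _ h
    set Ahi : Finset E := A.filter (fun e => ¬ v e < t) with hAhi
    have hApart : Alo.card + Ahi.card = k := by
      rw [hAlo, hAhi, Finset.card_filter_add_card_filter_not, hAk]
    have hB₁Z : B₁ ⊆ Z := (Finset.subset_union_right (s₁ := Alo)).trans hZ₂Z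
    have hAloZ : Alo ⊆ Z := (Finset.subset_union_left (s₂ := B₁)).trans hZ₂Z
    have hZA : Z ∩ A = Alo ∪ (Z ∩ Ahi) := by
      ext x
      simp only [Finset.mem_inter, Finset.mem_union, hAlo, hAhi, Finset.mem_filter]
      constructor
      · rintro ⟨hxZ, hxA⟩
        by_cases hvx : v x < t
        · exact Or.inl ⟨hxA, hvx⟩
        · exact Or.inr ⟨hxZ, hxA, hvx⟩
      · rintro (⟨hxA, hvx⟩ | ⟨hxZ, hxA, hvx⟩)
        · exact ⟨hAloZ (by rw [hAlo]; exact Finset.mem_filter.mpr ⟨hxA, hvx⟩), hxA⟩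
        · exact ⟨hxZ, hxA⟩
    have hdisjZA : Disjoint Alo (Z ∩ Ahi) := by
      rw [Finset.disjoint_left]
      intro x hx hx'
      exact (Finset.mem_filter.mp (Finset.mem_inter.mp hx').2).2 (Finset.mem_filter.mp hx).2
    have hZAc : (Z ∩ A).card = Alo.card + (Z ∩ Ahi).card := by
      rw [hZA, Finset.card_union_of_disjoint hdisjZA]
    have hZpart : Z = (Z ∩ A) ∪ B₁ := by
      ext x
      constructor
      · intro hx
        rcases Finset.mem_union.mp (hZAB₁ hx) with h | h
        · exact Finset.mem_union_left _ (Finset.mem_inter.mpr ⟨hx, h⟩)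
        · exact Finset.mem_union_right _ h
      · intro hx
        rcases Finset.mem_union.mp hx with h | h
        · exact (Finset.mem_inter.mp h).1
        · exact hB₁Z h
    have hdisjZB : Disjoint (Z ∩ A) B₁ :=
      Finset.disjoint_of_subset_left Finset.inter_subset_right
        (Finset.disjoint_of_subset_right hB₁B hAB)
    have hZcard2 : (Z ∩ A).card + j = k := by
      have h := congrArg Finset.card hZpart
      rw [Finset.card_union_of_disjoint hdisjZB] at h
      omega
    set Astar : Finset E := Ahi \ Z with hAstar
    have hAstarc : Astar.card + (Ahi ∩ Z).card = Ahi.card := by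
      rw [hAstar]
      exact Finset.card_sdiff_add_card_inter _ _
    have hintercomm : (Ahi ∩ Z).card = (Z ∩ Ahi).card := by rw [Finset.inter_comm]
    have hAstarj : Astar.card = j := by omega
    obtain ⟨A'', hA''sub, hA''uni, hA''p⟩ := exists_unicolor_sub W hW Astar
    have hA''A : A'' ⊆ A :=
      hA''sub.trans (Finset.sdiff_subset.trans (Finset.filter_subset _ _))
    set X : Finset E := A \ A'' with hX
    have hXI : M.Indep X := M.subset_indep Finset.sdiff_subset hA
    have hXc : X.card + A''.card = k := by
      rw [hX, Finset.card_sdiff_add_card_eq_card hA''A, hAk]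
    obtain ⟨Z₃, hZ₃I, hXZ₃, hZ₃sub, hZ₃c⟩ := M.aug hXI hZI (by omega)
    rw [hZc] at hZ₃c
    set B'' : Finset E := Z₃ \ X with hB''
    have hB''B₁ : B'' ⊆ B₁ := by
      intro x hx
      rcases Finset.mem_sdiff.mp hx with ⟨hxZ₃, hxX⟩
      have hxZ : x ∈ Z := by
        rcases Finset.mem_union.mp (hZ₃sub hxZ₃) with h | h
        · exact absurd h hxX
        · exact h
      by_cases hxA : x ∈ A
      · exfalso
        have hxA'' : x ∈ A'' := by
          by_contra hc'
          exact hxX (Finset.mem_sdiff.mpr ⟨hxA, hc'⟩)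
        have : x ∈ Astar := hA''sub hxA''
        exact (Finset.mem_sdiff.mp this).2 hxZ
      · rcases Finset.mem_union.mp (hZAB₁ hxZ) with h | h
        · exact absurd h hxA
        · exact h
    have hZ₃eq : X ∪ B'' = Z₃ := by
      rw [hB'']
      exact Finset.union_sdiff_of_subset hXZ₃
    have hB''c : B''.card + X.card = k := by
      rw [hB'', Finset.card_sdiff_add_card_eq_card hXZ₃, hZ₃c]
    have hcardeq : A''.card = B''.card := by omega
    refine ⟨A'', hA''A, B'', hB''B₁.trans hB₁B, hA''uni, ?_, ?_, hcardeq, ?_, ?_⟩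
    · intro x hx y hy
      exact hB₁uni x (hB''B₁ hx) y (hB''B₁ hy)
    · have : M.Indep (X ∪ B'') := by rw [hZ₃eq]; exact hZ₃I
      exact this
    · -- cardinality bound
      rw [div_le_iff₀ hdenom]
      have h2 : (B₁'.card:ℤ) ≤ (P:ℤ) * j := by exact_mod_cast hB₁p
      have h3 : (j:ℤ) ≤ (P:ℤ) * A''.card := by
        rw [← hAstarj]
        exact_mod_cast hA''p
      have hZkey : (k:ℤ) - D*μ ≤ N^2 * (P:ℤ)^2 * (A''.card:ℤ) := by
        have h1 : (B₁'.card:ℤ) = (Bleq.card:ℤ) - (Alo.card:ℤ) := by omega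
        have hP0 : (0:ℤ) ≤ (P:ℤ) := by positivity
        have hc0 : (0:ℤ) ≤ (A''.card:ℤ) := by exact_mod_cast Nat.zero_le _
        have s1 : N * ((Bleq.card:ℤ) - (Alo.card:ℤ)) ≤ N * ((P:ℤ) * ((P:ℤ) * A''.card)) := by
          apply mul_le_mul_of_nonneg_left _ (by omega)
          rw [← h1]
          calc (B₁'.card:ℤ) ≤ (P:ℤ) * j := h2
            _ ≤ (P:ℤ) * ((P:ℤ) * A''.card) := mul_le_mul_of_nonneg_left h3 hP0
        have base : (0:ℤ) ≤ N * ((P:ℤ) * ((P:ℤ) * A''.card)) :=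
          mul_nonneg (by linarith) (mul_nonneg hP0 (mul_nonneg hP0 hc0))
        have s2 : N * ((P:ℤ) * ((P:ℤ) * A''.card)) ≤ N^2 * (P:ℤ)^2 * (A''.card:ℤ) := by
          calc N * ((P:ℤ) * ((P:ℤ) * A''.card))
              = 1 * (N * ((P:ℤ) * ((P:ℤ) * A''.card))) := by ring
            _ ≤ N * (N * ((P:ℤ) * ((P:ℤ) * A''.card))) := mul_le_mul_of_nonneg_right hN1 base
            _ = N^2 * (P:ℤ)^2 * (A''.card:ℤ) := by ring
        linarith [ht, s1, s2]
      have hNr : ((N:ℤ):ℝ) = 2*(D:ℝ)*(Δ:ℝ)+1 := by rw [hN]; push_cast; ring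
      have hPr : ((P:ℕ):ℝ) = (2*(Δ:ℝ)+1)^m := by rw [hP]; push_cast; ring
      have hpow : (2*(Δ:ℝ)+1)^(2*m) = ((2*(Δ:ℝ)+1)^m)^2 := by
        rw [pow_mul']
      have hcast : ((k:ℝ) - (D:ℝ)*(μ:ℝ)) ≤ ((N:ℝ))^2 * ((P:ℕ):ℝ)^2 * (A''.card:ℝ) := by
        exact_mod_cast hZkey
      rw [hNr, hPr] at hcast
      rw [hpow]
      linarith [hcast]
    · intro a ha b hb
      have hat : ¬ v a < t := by
        have h1 : a ∈ Ahi := (Finset.mem_sdiff.mp (hA''sub ha)).1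
        exact (Finset.mem_filter.mp h1).2
      have hbt : v b ≤ t := by
        have h1 : b ∈ Bleq := hB₁'sub (hB₁sub (hB''B₁ hb))
        exact (Finset.mem_filter.mp h1).2
      have : v b ≤ v a := le_trans hbt (not_lt.mp hat)
      exact this
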